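/- Let (W, 𝒲, ν) be a σ-finite measure space and f : W × ℤ → ℝ with Σ_{k ∈ ℤ} ∫_W |f(v,k)|^α ν(dv) < ∞ for some α > 0 (no compact support assumption). With b_n and g defined as b_n^α = Σ_{j ∈ ℤ} ∫_W max_{k=0,…,n-1} |f(v, j+k)|^α ν(dv) and g(v) = sup_{k ∈ ℤ} |f(v,k)|, one has lim_{n→∞} n^{-1} b_n^α = ∫_W g(v)^α ν(dv) ∈ (0, ∞), provided f is not identically 0. -/

import Mathlib

open MeasureTheory Filter Function
open scoped ENNReal

private lemma ofReal_iSup_fin {n : ℕ} (r : Fin n → ℝ) :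
    ENNReal.ofReal (⨆ k, r k) = ⨆ k, ENNReal.ofReal (r k) := by
  rcases Nat.eq_zero_or_pos n with rfl | hn
  · rw [show (⨆ k : Fin 0, r k) = 0 by rw [iSup, Set.range_eq_empty, Real.sSup_empty]]
    simp
  · have : Nonempty (Fin n) := Fin.pos_iff_nonempty.mp hn
    obtain ⟨k0, hk0⟩ := Finite.exists_max r
    have h1 : (⨆ k, r k) = r k0 :=
      le_antisymm (ciSup_le hk0) (le_ciSup (Set.Finite.bddAbove (Set.finite_range r)) k0)
    have h2 : (⨆ k, ENNReal.ofReal (r k)) = ENNReal.ofReal (r k0) :=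
      le_antisymm (iSup_le fun j => ENNReal.ofReal_le_ofReal (hk0 j)) (le_iSup (fun k => ENNReal.ofReal (r k)) k0)
    rw [h1, h2]

private lemma aux_const_div_zero {c : ℝ≥0∞} (hc : c ≠ ∞) :
    Tendsto (fun n : ℕ => c / (n : ℝ≥0∞)) atTop (nhds 0) := by
  simpa [div_eq_mul_inv] using
    ENNReal.Tendsto.const_mul (a := c) ENNReal.tendsto_inv_nat_nhds_zero (Or.inr hc)

private lemma aux_div_tendsto_add (c : ℕ) :
    Tendsto (fun n : ℕ => ((c + n : ℕ) : ℝ≥0∞) / (n : ℝ≥0∞)) atTop (nhds 1) := by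
  have h0 : Tendsto (fun n : ℕ => (c : ℝ≥0∞) / (n : ℝ≥0∞) + 1) atTop (nhds 1) := by
    simpa using (aux_const_div_zero (c := (c : ℝ≥0∞)) (by simp)).add
      (tendsto_const_nhds (x := (1 : ℝ≥0∞)))
  refine h0.congr' ?_
  filter_upwards [eventually_ge_atTop 1] with n hn
  have hn0 : (n : ℝ≥0∞) ≠ 0 := by exact_mod_cast Nat.one_le_iff_ne_zero.mp hn
  rw [Nat.cast_add, ← ENNReal.div_add_div_same,
    ENNReal.div_self hn0 (ENNReal.natCast_ne_top n)]

private lemma aux_div_tendsto_sub (c : ℕ) :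
    Tendsto (fun n : ℕ => ((n - c : ℕ) : ℝ≥0∞) / (n : ℝ≥0∞)) atTop (nhds 1) := by
  have h0 : Tendsto (fun n : ℕ => 1 - (c : ℝ≥0∞) / (n : ℝ≥0∞)) atTop (nhds 1) := by
    simpa using ENNReal.Tendsto.sub (tendsto_const_nhds (x := (1 : ℝ≥0∞)))
      (aux_const_div_zero (by simp)) (Or.inl ENNReal.one_ne_top)
  refine h0.congr' ?_
  filter_upwards [eventually_ge_atTop (max 1 c)] with n hn
  have hn1 : 1 ≤ n := le_trans (le_max_left _ _) hn
  have hcn : c ≤ n := le_trans (le_max_right _ _) hn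
  have hn0 : (n : ℝ≥0∞) ≠ 0 := by exact_mod_cast Nat.one_le_iff_ne_zero.mp hn1
  refine ENNReal.sub_eq_of_eq_add (ENNReal.div_lt_top (by simp) hn0).ne ?_
  rw [ENNReal.div_add_div_same, ← Nat.cast_add, Nat.sub_add_cancel hcn,
    ENNReal.div_self hn0 (ENNReal.natCast_ne_top n)]

/-- For a general kernel `f : W × ℤ → ℝ` (no compact support) with finite total
`α`-mass and not ν-a.e. identically zero, `n^{-1} b_n^α → ∫ g^α dν ∈ (0, ∞)`. -/
theorem stmt5 {W : Type*} [MeasurableSpace W] (ν : Measure W) [SigmaFinite ν]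
    (α : ℝ) (hα : 0 < α) (f : W × ℤ → ℝ)
    (hf_meas : ∀ k : ℤ, Measurable (fun v => f (v, k)))
    (hsum : (∑' k : ℤ, ∫⁻ v, ENNReal.ofReal (|f (v, k)| ^ α) ∂ν) < ∞)
    (hnz : ¬ (∀ᵐ v ∂ν, ∀ k : ℤ, f (v, k) = 0))
    (bα : ℕ → ℝ≥0∞)
    (hbα : ∀ n, bα n =
      ∑' j : ℤ, ∫⁻ v, ENNReal.ofReal (⨆ k : Fin n, |f (v, j + k)| ^ α) ∂ν)
    (g : W → ℝ) (hg : ∀ v, g v = ⨆ k : ℤ, |f (v, k)|) :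
    0 < ∫⁻ v, ENNReal.ofReal (g v ^ α) ∂ν ∧
      (∫⁻ v, ENNReal.ofReal (g v ^ α) ∂ν) < ∞ ∧
      Tendsto (fun n : ℕ => bα n / (n : ℝ≥0∞)) atTop
        (nhds (∫⁻ v, ENNReal.ofReal (g v ^ α) ∂ν)) := by
  classical
  set a : ℤ → W → ℝ≥0∞ := fun l v => ENNReal.ofReal (|f (v, l)| ^ α) with ha_def
  have ha_meas : ∀ l, Measurable (a l) := fun l =>
    ENNReal.measurable_ofReal.comp ((hf_meas l).abs.pow measurable_const)
  set F : ℤ → ℝ≥0∞ := fun l => ∫⁻ v, a l v ∂ν with hF_def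
  have hS : (∑' l : ℤ, F l) < ∞ := hsum
  set h : W → ℝ≥0∞ := fun v => ⨆ l : ℤ, a l v with hh_def
  have hh_meas : Measurable h := Measurable.iSup ha_meas
  set I : ℝ≥0∞ := ∫⁻ v, h v ∂ν with hI_def
  have hIS : I ≤ ∑' l : ℤ, F l := by
    calc I ≤ ∫⁻ v, ∑' l : ℤ, a l v ∂ν :=
        lintegral_mono fun v => iSup_le fun l => ENNReal.le_tsum l
    _ = ∑' l : ℤ, F l := lintegral_tsum fun l => (ha_meas l).aemeasurable
  have hI_top : I ≠ ∞ := (lt_of_le_of_lt hIS hS).ne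
  -- a.e. identification of `ofReal (g ^ α)` with `h`
  have h_ae_lt : ∀ᵐ v ∂ν, h v < ∞ := ae_lt_top hh_meas hI_top
  have h_ae_eq : (fun v => ENNReal.ofReal (g v ^ α)) =ᵐ[ν] h := by
    filter_upwards [h_ae_lt] with v hv
    have hb : ∀ k : ℤ, |f (v, k)| ^ α ≤ (h v).toReal := fun k =>
      (ENNReal.ofReal_le_iff_le_toReal hv.ne).mp (le_iSup (fun l => a l v) k)
    have hM : ∀ k : ℤ, |f (v, k)| ≤ (h v).toReal ^ α⁻¹ := fun k => by
      rw [← Real.rpow_rpow_inv (abs_nonneg (f (v, k))) hα.ne']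
      exact Real.rpow_le_rpow (Real.rpow_nonneg (abs_nonneg _) _) (hb k)
        (inv_nonneg.mpr hα.le)
    have hbdd : BddAbove (Set.range fun k : ℤ => |f (v, k)|) :=
      ⟨_, by rintro x ⟨k, rfl⟩; exact hM k⟩
    have hg0 : 0 ≤ g v := by
      rw [hg]; exact (abs_nonneg (f (v, 0))).trans (le_ciSup hbdd 0)
    refine le_antisymm ?_ (iSup_le fun k => ENNReal.ofReal_le_ofReal
      (Real.rpow_le_rpow (abs_nonneg _) (by rw [hg]; exact le_ciSup hbdd k) hα.le))
    have hgM : g v ≤ (h v).toReal ^ α⁻¹ := by rw [hg]; exact ciSup_le hM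
    have h2 : g v ^ α ≤ (h v).toReal := by
      calc g v ^ α ≤ ((h v).toReal ^ α⁻¹) ^ α := Real.rpow_le_rpow hg0 hgM hα.le
      _ = (h v).toReal := Real.rpow_inv_rpow ENNReal.toReal_nonneg hα.ne'
    calc ENNReal.ofReal (g v ^ α) ≤ ENNReal.ofReal (h v).toReal :=
        ENNReal.ofReal_le_ofReal h2
    _ = h v := ENNReal.ofReal_toReal hv.ne
  have hGI : (∫⁻ v, ENNReal.ofReal (g v ^ α) ∂ν) = I := lintegral_congr_ae h_ae_eq
  -- positivity
  have hIpos : 0 < I := by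
    refine pos_iff_ne_zero.mpr fun h0 => hnz ?_
    have hz := (lintegral_eq_zero_iff hh_meas).mp h0
    filter_upwards [hz] with v hv
    intro k
    simp only [Pi.zero_apply] at hv
    have h1 : a k v = 0 :=
      le_antisymm (le_trans (le_iSup (fun l => a l v) k) (le_of_eq hv)) zero_le
    have h3 : |f (v, k)| ^ α = 0 :=
      le_antisymm (ENNReal.ofReal_eq_zero.mp h1) (Real.rpow_nonneg (abs_nonneg _) _)
    exact abs_eq_zero.mp ((Real.rpow_eq_zero (abs_nonneg _) hα.ne').mp h3)
  -- rewrite bα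
  have hbα' : ∀ n, bα n = ∑' j : ℤ, ∫⁻ v, ⨆ k : Fin n, a (j + k) v ∂ν := by
    intro n
    rw [hbα n]
    exact tsum_congr fun j => lintegral_congr fun v => ofReal_iSup_fin _
  -- tails
  set T : ℕ → ℝ≥0∞ := fun m => ∑' l : ℤ, if (m : ℤ) < |l| then F l else 0 with hT_def
  have hT_small : ∀ ε : ℝ≥0∞, 0 < ε → ∃ m : ℕ, T m ≤ ε := by
    intro ε hε
    have htt := ENNReal.tendsto_tsum_compl_atTop_zero (f := F) hS.ne
    obtain ⟨s, hs⟩ := ((tendsto_order.1 htt).2 ε hε).exists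
    refine ⟨s.sup fun l => l.natAbs, ?_⟩
    calc T (s.sup fun l => l.natAbs)
        ≤ ∑' l : ℤ, Set.indicator {l : ℤ | l ∉ s} F l := by
          rw [hT_def]
          refine ENNReal.tsum_le_tsum fun l => ?_
          by_cases hl : (((s.sup fun l => l.natAbs : ℕ)) : ℤ) < |l|
          · have hls : l ∉ s := fun hmem => by
              have h1 : l.natAbs ≤ s.sup fun l => l.natAbs := Finset.le_sup hmem
              have h2 : |l| = (l.natAbs : ℤ) := Int.abs_eq_natAbs l
              omega
            rw [if_pos hl, Set.indicator_of_mem (by exact hls)]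
          · rw [if_neg hl]; exact zero_le
      _ = ∑' l : {l : ℤ // l ∉ s}, F l := (tsum_subtype _ _).symm
      _ ≤ ε := hs.le
  -- upper bound
  have hupper : ∀ (m n : ℕ), 1 ≤ n →
      bα n ≤ ((2 * m + n : ℕ) : ℝ≥0∞) * I + (n : ℝ≥0∞) * T m := by
    intro m n hn
    rw [hbα' n]
    set s : Finset ℤ := Finset.Icc (-(m : ℤ) - n + 1) (m : ℤ) with hs_def
    have hcard : s.card = 2 * m + n := by
      rw [hs_def, Int.card_Icc]
      omega
    have hstep : ∀ j : ℤ, (∫⁻ v, ⨆ k : Fin n, a (j + k) v ∂ν) ≤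
        (if j ∈ s then I else 0) +
          ∑ k : Fin n, (if (m : ℤ) < |j + (k : ℤ)| then F (j + k) else 0) := by
      intro j
      have hpt : ∀ v, (⨆ k : Fin n, a (j + k) v) ≤
          (if j ∈ s then h v else 0) +
            ∑ k : Fin n, (if (m : ℤ) < |j + (k : ℤ)| then a (j + k) v else 0) := by
        intro v
        refine iSup_le fun k => ?_
        by_cases hk : (m : ℤ) < |j + (k : ℤ)|
        · refine le_add_left ?_
          have heq : (if (m : ℤ) < |j + (k : ℤ)| then a (j + k) v else 0) = a (j + k) v :=
            if_pos hk
          refine le_trans (le_of_eq heq.symm) ?_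
          exact Finset.single_le_sum
            (f := fun k : Fin n => if (m : ℤ) < |j + (k : ℤ)| then a (j + k) v else 0)
            (fun _ _ => zero_le) (Finset.mem_univ k)
        · have hjk := abs_le.mp (not_lt.mp hk)
          have hjs : j ∈ s := by
            rw [hs_def, Finset.mem_Icc]
            have hk1 : (0 : ℤ) ≤ (k : ℤ) := by positivity
            have hk2 : (k : ℤ) < (n : ℤ) := by exact_mod_cast k.isLt
            omega
          calc a (j + k) v ≤ h v := le_iSup (fun l => a l v) (j + (k : ℤ))
          _ = (if j ∈ s then h v else 0) := (if_pos hjs).symm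
          _ ≤ _ := le_self_add
      have hmeas1 : Measurable fun v => (if j ∈ s then h v else 0 : ℝ≥0∞) := by
        by_cases hj : j ∈ s
        · simp only [if_pos hj]; exact hh_meas
        · simp only [if_neg hj]; exact measurable_const
      calc (∫⁻ v, ⨆ k : Fin n, a (j + k) v ∂ν)
          ≤ ∫⁻ v, ((if j ∈ s then h v else 0) +
              ∑ k : Fin n, (if (m : ℤ) < |j + (k : ℤ)| then a (j + k) v else 0)) ∂ν :=
            lintegral_mono hpt
        _ = _ := by
            rw [lintegral_add_left hmeas1]
            congr 1
            · by_cases hj : j ∈ s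
              · simp only [if_pos hj]; rfl
              · simp only [if_neg hj, lintegral_zero]
            · rw [lintegral_finset_sum]
              · refine Finset.sum_congr rfl fun k _ => ?_
                by_cases hk : (m : ℤ) < |j + (k : ℤ)|
                · simp only [if_pos hk]; rfl
                · simp only [if_neg hk, lintegral_zero]
              · intro k _
                by_cases hk : (m : ℤ) < |j + (k : ℤ)|
                · simp only [if_pos hk]; exact ha_meas _
                · simp only [if_neg hk]; exact measurable_const
    calc (∑' j : ℤ, ∫⁻ v, ⨆ k : Fin n, a (j + k) v ∂ν)
        ≤ ∑' j : ℤ, ((if j ∈ s then I else 0) +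
            ∑ k : Fin n, (if (m : ℤ) < |j + (k : ℤ)| then F (j + k) else 0)) :=
          ENNReal.tsum_le_tsum hstep
      _ = (∑' j : ℤ, if j ∈ s then I else 0) +
            ∑' j : ℤ, ∑ k : Fin n, (if (m : ℤ) < |j + (k : ℤ)| then F (j + k) else 0) :=
          ENNReal.tsum_add
      _ = ((2 * m + n : ℕ) : ℝ≥0∞) * I + (n : ℝ≥0∞) * T m := by
          congr 1
          · rw [tsum_eq_sum (s := s) fun j hj => if_neg hj,
              Finset.sum_congr rfl fun j hj => if_pos hj, Finset.sum_const, hcard,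
              nsmul_eq_mul]
          · rw [Summable.tsum_finsetSum fun k _ => ENNReal.summable]
            have hk : ∀ k : Fin n,
                (∑' j : ℤ, if (m : ℤ) < |j + (k : ℤ)| then F (j + k) else 0) = T m := by
              intro k
              rw [hT_def]
              exact (Equiv.addRight (k : ℤ)).tsum_eq fun l => if (m : ℤ) < |l| then F l else 0
            rw [Finset.sum_congr rfl fun k _ => hk k, Finset.sum_const, Finset.card_univ,
              Fintype.card_fin, nsmul_eq_mul]
  -- limsup bound
  set u : ℕ → ℝ≥0∞ := fun n => bα n / (n : ℝ≥0∞) with hu_def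
  have hlimsup : limsup u atTop ≤ I := by
    refine ENNReal.le_of_forall_pos_le_add fun ε hε _ => ?_
    obtain ⟨m, hm⟩ := hT_small ε (by exact_mod_cast hε)
    have hc1 : Tendsto (fun n : ℕ => ((2 * m + n : ℕ) : ℝ≥0∞) / (n : ℝ≥0∞) * I + T m)
        atTop (nhds (I + T m)) := by
      have h1 := ENNReal.Tendsto.mul_const (aux_div_tendsto_add (2 * m))
        (b := I) (Or.inl one_ne_zero)
      simpa using h1.add (tendsto_const_nhds (x := T m))
    have hev : ∀ᶠ n in atTop, u n ≤ ((2 * m + n : ℕ) : ℝ≥0∞) / (n : ℝ≥0∞) * I + T m := by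
      filter_upwards [eventually_ge_atTop 1] with n hn
      have hn0 : (n : ℝ≥0∞) ≠ 0 := by exact_mod_cast Nat.one_le_iff_ne_zero.mp hn
      have hntop : (n : ℝ≥0∞) ≠ ∞ := ENNReal.natCast_ne_top n
      calc u n ≤ (((2 * m + n : ℕ) : ℝ≥0∞) * I + (n : ℝ≥0∞) * T m) / (n : ℝ≥0∞) :=
          ENNReal.div_le_div_right (hupper m n hn) _
        _ = ((2 * m + n : ℕ) : ℝ≥0∞) / (n : ℝ≥0∞) * I + T m := by
            rw [ENNReal.add_div]
            congr 1
            · rw [mul_comm, mul_div_assoc, mul_comm]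
            · rw [mul_comm, mul_div_assoc, ENNReal.div_self hn0 hntop, mul_one]
    calc limsup u atTop
        ≤ limsup (fun n : ℕ => ((2 * m + n : ℕ) : ℝ≥0∞) / (n : ℝ≥0∞) * I + T m) atTop :=
          limsup_le_limsup hev
      _ = I + T m := hc1.limsup_eq
      _ ≤ I + ε := by gcongr
  -- truncated sups
  set p : ℕ → W → ℝ≥0∞ := fun m v => ⨆ l : ℤ, if |l| ≤ (m : ℤ) then a l v else 0 with hp_def
  have hp_meas : ∀ m, Measurable (p m) := by
    intro m
    refine Measurable.iSup fun l => ?_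
    by_cases h1 : |l| ≤ (m : ℤ)
    · simp only [if_pos h1]; exact ha_meas l
    · simp only [if_neg h1]; exact measurable_const
  have hp_mono : Monotone p := by
    intro m m' hmm' v
    refine iSup_mono fun l => ?_
    by_cases h1 : |l| ≤ (m : ℤ)
    · rw [if_pos h1, if_pos (h1.trans (by exact_mod_cast hmm'))]
    · rw [if_neg h1]; exact zero_le
  have hp_sup : ∀ v, (⨆ m : ℕ, p m v) = h v := by
    intro v
    rw [hh_def]
    refine le_antisymm (iSup_le fun m => iSup_le fun l => ?_) (iSup_le fun l => ?_)
    · by_cases h1 : |l| ≤ (m : ℤ)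
      · rw [if_pos h1]; exact le_iSup (fun l => a l v) l
      · rw [if_neg h1]; exact zero_le
    · refine le_iSup_of_le l.natAbs (le_trans ?_
        (le_iSup (fun l' : ℤ => if |l'| ≤ ((l.natAbs : ℕ) : ℤ) then a l' v else 0) l))
      rw [if_pos (le_of_eq (Int.abs_eq_natAbs l))]
  set G : ℕ → ℝ≥0∞ := fun m => ∫⁻ v, p m v ∂ν with hG_def
  have hI_sup : I = ⨆ m : ℕ, G m := by
    calc I = ∫⁻ v, ⨆ m : ℕ, p m v ∂ν := lintegral_congr fun v => (hp_sup v).symm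
    _ = ⨆ m : ℕ, G m := lintegral_iSup hp_meas hp_mono
  -- lower bound
  have hlower : ∀ (m n : ℕ), 2 * m + 1 ≤ n →
      ((n - 2 * m : ℕ) : ℝ≥0∞) * G m ≤ bα n := by
    intro m n hn
    rw [hbα' n]
    set s : Finset ℤ := Finset.Icc ((m : ℤ) - n + 1) (-(m : ℤ)) with hs_def
    have hcard : s.card = n - 2 * m := by
      rw [hs_def, Int.card_Icc]
      omega
    have hterm : ∀ j ∈ s, G m ≤ ∫⁻ v, ⨆ k : Fin n, a (j + k) v ∂ν := by
      intro j hj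
      rw [hs_def, Finset.mem_Icc] at hj
      refine lintegral_mono fun v => iSup_le fun l => ?_
      by_cases h1 : |l| ≤ (m : ℤ)
      · rw [if_pos h1]
        have habs := abs_le.mp h1
        have hk1 : (0 : ℤ) ≤ l - j := by omega
        have hk2 : (l - j).toNat < n := by omega
        have hcast : (((l - j).toNat : ℕ) : ℤ) = l - j := Int.toNat_of_nonneg hk1
        have hjk : j + ((⟨(l - j).toNat, hk2⟩ : Fin n) : ℤ) = l := by
          simp only [Fin.val_mk]
          omega
        have hle := le_iSup (fun k : Fin n => a (j + k) v) (⟨(l - j).toNat, hk2⟩ : Fin n)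
        rw [hjk] at hle
        exact hle
      · rw [if_neg h1]; exact zero_le
    calc ((n - 2 * m : ℕ) : ℝ≥0∞) * G m = ∑ _j ∈ s, G m := by
          rw [Finset.sum_const, hcard, nsmul_eq_mul]
    _ ≤ ∑ j ∈ s, ∫⁻ v, ⨆ k : Fin n, a (j + k) v ∂ν := Finset.sum_le_sum hterm
    _ ≤ ∑' j : ℤ, ∫⁻ v, ⨆ k : Fin n, a (j + k) v ∂ν := ENNReal.sum_le_tsum s
  have hliminf : I ≤ liminf u atTop := by
    rw [hI_sup]
    refine iSup_le fun m => ?_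
    have hd : Tendsto (fun n : ℕ => ((n - 2 * m : ℕ) : ℝ≥0∞) / (n : ℝ≥0∞) * G m)
        atTop (nhds (G m)) := by
      simpa using ENNReal.Tendsto.mul_const (aux_div_tendsto_sub (2 * m))
        (b := G m) (Or.inl one_ne_zero)
    have hev : ∀ᶠ n in atTop, ((n - 2 * m : ℕ) : ℝ≥0∞) / (n : ℝ≥0∞) * G m ≤ u n := by
      filter_upwards [eventually_ge_atTop (2 * m + 1)] with n hn
      calc ((n - 2 * m : ℕ) : ℝ≥0∞) / (n : ℝ≥0∞) * G m
          = (((n - 2 * m : ℕ) : ℝ≥0∞) * G m) / (n : ℝ≥0∞) := by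
            simp [div_eq_mul_inv, mul_comm, mul_assoc, mul_left_comm]
      _ ≤ bα n / (n : ℝ≥0∞) := ENNReal.div_le_div_right (hlower m n hn) _
    calc G m = liminf (fun n : ℕ => ((n - 2 * m : ℕ) : ℝ≥0∞) / (n : ℝ≥0∞) * G m) atTop :=
        hd.liminf_eq.symm
    _ ≤ liminf u atTop := liminf_le_liminf hev
  refine ⟨by rw [hGI]; exact hIpos, by rw [hGI]; exact lt_of_le_of_lt hIS hS, ?_⟩
  rw [hGI]
  exact tendsto_of_le_liminf_of_limsup_le hliminf hlimsup
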